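/- Alternative decoupling limit of the coupled σ-model coefficients (Section 3.3.3). Let N = N_1 + N_2 with N_1, N_2 ≥ 1. For k = 1, 2, fix block data consisting of pairwise distinct positions z^{(k)}_1,…,z^{(k)}_{N_k}, zeros (ζ^{(k)}_i)_{i∈I^{(k)}_+⊔I^{(k)}_−} with |I^{(k)}_±| = N_k, all 3N_k numbers of block k pairwise distinct as required, and a common constant ℓ^∞ ∈ ℂ. For real γ ≠ 0 form the combined data of size N: positions z_r(γ) = z^{(1)}_r for r ≤ N_1 and z_{N_1+r}(γ) = z^{(2)}_r + γ^{−1} for r ≤ N_2; zeros ζ_i(γ) = ζ^{(1)}_i for i in block 1 and ζ_i(γ) = ζ^{(2)}_i + γ^{−1} for i in block 2, with I_± = I^{(1)}_± ⊔ I^{(2)}_±. Then for all sufficiently small γ ≠ 0 the combined data satisfies the distinctness hypotheses, the half twist functions factorise as φ_±(z; γ) = φ^{(1)}_±(z) φ^{(2)}_±(z − γ^{−1}), and as γ → 0 the action coefficients ρ_rs(γ) and k_r(γ) built from the combined data satisfy: ρ_rs(γ) → ρ^{(k)}_{r̄ s̄} if r and s lie in the same block k (where r̄, s̄ are the within-block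 indices and ρ^{(k)} is built from the block-k data alone); ρ_rs(γ) → 0 if r and s lie in different blocks; and k_r(γ) → k^{(k)}_{r̄}. Consequently the action of the N-coupled model converges, coefficient by coefficient, to the sum of the actions of the two decoupled models. -/

import Mathlib

open scoped BigOperators Topology
open Filter

/-- One of the two "halves" `φ_±(w) = ∏_{i ∈ I} (w - ζ_i) / ∏_r (w - z_r)` of the twist
function. -/
noncomputable def phiHalf {ι κ : Type*} [Fintype ι] [Fintype κ]
    (z : ι → ℂ) (ζ : κ → ℂ) (I : Finset κ) (w : ℂ) : ℂ :=
  (∏ i ∈ I, (w - ζ i)) / ∏ r, (w - z r)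

/-- The function `φ^r_±(w) = (w - z_r) φ_±(w) = ∏_{i ∈ I} (w - ζ_i) / ∏_{s ≠ r} (w - z_s)`. -/
noncomputable def phiHalfR {ι κ : Type*} [Fintype ι] [DecidableEq ι] [Fintype κ]
    (z : ι → ℂ) (ζ : κ → ℂ) (I : Finset κ) (r : ι) (w : ℂ) : ℂ :=
  (∏ i ∈ I, (w - ζ i)) / ∏ s ∈ Finset.univ.erase r, (w - z s)

/-- The coefficients `ρ_{rs}` of the coupled σ-model action (Equation (3.19)). -/
noncomputable def rhoCoef {ι κ : Type*} [Fintype ι] [DecidableEq ι] [Fintype κ]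
    (linf : ℂ) (z : ι → ℂ) (ζ : κ → ℂ) (Ip Im : Finset κ) (r s : ι) : ℂ :=
  if r = s then
    linf / 4 * (deriv (phiHalfR z ζ Ip r) (z r) * phiHalfR z ζ Im r (z r)
      - phiHalfR z ζ Ip r (z r) * deriv (phiHalfR z ζ Im r) (z r))
  else
    linf / 2 * phiHalfR z ζ Ip r (z r) * phiHalfR z ζ Im s (z s) / (z r - z s)

/-- The Wess–Zumino levels `k_r` of the coupled σ-model (Equation (3.22)). -/
noncomputable def kCoef {ι κ : Type*} [Fintype ι] [DecidableEq ι] [Fintype κ]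
    (linf : ℂ) (z : ι → ℂ) (ζ : κ → ℂ) (Ip Im : Finset κ) (r : ι) : ℂ :=
  linf / 2 * (phiHalfR z ζ Ip r (z r) * deriv (phiHalfR z ζ Im r) (z r)
    + deriv (phiHalfR z ζ Ip r) (z r) * phiHalfR z ζ Im r (z r))

set_option linter.unusedSectionVars false

section Helpers
open Filter Bornology

private lemma aff_cobounded {α : Type*} {l : Filter α} {v : α → ℂ}
    (hv : Tendsto v l (cobounded ℂ)) (c ε : ℂ) (hε : ε ≠ 0) :
    Tendsto (fun t => c + ε * v t) l (cobounded ℂ) := by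
  rw [← tendsto_norm_atTop_iff_cobounded]
  have hnv : Tendsto (fun t => ‖ε‖ * ‖v t‖ - ‖c‖) l atTop := by
    apply tendsto_atTop_add_const_right
    exact (tendsto_norm_atTop_iff_cobounded.2 hv).const_mul_atTop (norm_pos_iff.mpr hε)
  refine tendsto_atTop_mono (fun t => ?_) hnv
  have h1 : ‖ε * v t‖ ≤ ‖c + ε * v t‖ + ‖c‖ := by
    calc ‖ε * v t‖ = ‖(c + ε * v t) - c‖ := by ring_nf
    _ ≤ ‖c + ε * v t‖ + ‖c‖ := norm_sub_le _ _
  rw [norm_mul] at h1; linarith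

private lemma sub_const_cobounded (b : ℂ) :
    Tendsto (fun x : ℂ => x - b) (cobounded ℂ) (cobounded ℂ) := by
  have := aff_cobounded (tendsto_id (x := cobounded ℂ)) (-b) 1 one_ne_zero
  simpa [add_comm, sub_eq_add_neg] using this

private lemma tendsto_factor (a b : ℂ) :
    Tendsto (fun x : ℂ => (x - a) / (x - b)) (cobounded ℂ) (𝓝 1) := by
  have hb := sub_const_cobounded b
  have h0 : Tendsto (fun x : ℂ => 1 + (b - a) * (x - b)⁻¹) (cobounded ℂ) (𝓝 1) := by
    have := (tendsto_const_nhds (x := (b - a : ℂ))).mul (tendsto_inv₀_cobounded.comp hb)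
    simpa using (tendsto_const_nhds (x := (1:ℂ))).add this
  refine h0.congr' ?_
  filter_upwards [hb.eventually (Bornology.eventually_ne_cobounded 0)] with x hx
  field_simp
  ring

private lemma tendsto_prodFactor {ι : Type*} (s : Finset ι) (a b : ι → ℂ) :
    Tendsto (fun x : ℂ => ∏ i ∈ s, (x - a i) / (x - b i)) (cobounded ℂ) (𝓝 1) := by
  have := tendsto_finset_prod (f := fun i (x : ℂ) => (x - a i) / (x - b i))
    (a := fun _ => (1:ℂ)) s (fun i _ => tendsto_factor (a i) (b i))
  simpa using this

private lemma hasDerivAt_prodFactor {ι : Type*} [DecidableEq ι] (s : Finset ι) (a b : ι → ℂ)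
    {x : ℂ} (hx : ∀ i ∈ s, x ≠ b i) :
    HasDerivAt (fun x : ℂ => ∏ i ∈ s, (x - a i) / (x - b i))
      (∑ i ∈ s, (∏ j ∈ s.erase i, (x - a j) / (x - b j)) * ((a i - b i) / (x - b i) ^ 2)) x := by
  have h := HasDerivAt.fun_finsetProd (u := s) (x := x)
    (f := fun i (x : ℂ) => (x - a i) / (x - b i))
    (f' := fun i => (a i - b i) / (x - b i) ^ 2) ?_
  · simpa [smul_eq_mul] using h
  · intro i hi
    have h1 : HasDerivAt (fun x : ℂ => x - a i) 1 x := (hasDerivAt_id x).sub_const _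
    have h2 : HasDerivAt (fun x : ℂ => x - b i) 1 x := (hasDerivAt_id x).sub_const _
    have hne : x - b i ≠ 0 := sub_ne_zero.2 (hx i hi)
    have := h1.fun_div h2 hne
    convert this using 1
    field_simp
    ring

section H2
variable {ι : Type*} [DecidableEq ι]

private lemma tendsto_derivFormula_zero (s : Finset ι) (a b : ι → ℂ) :
    Tendsto (fun x : ℂ => ∑ i ∈ s,
        (∏ j ∈ s.erase i, (x - a j) / (x - b j)) * ((a i - b i) / (x - b i) ^ 2))
      (cobounded ℂ) (𝓝 0) := by
  have key : ∀ i ∈ s, Tendsto (fun x : ℂ =>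
      (∏ j ∈ s.erase i, (x - a j) / (x - b j)) * ((a i - b i) / (x - b i) ^ 2))
      (cobounded ℂ) (𝓝 0) := by
    intro i _
    have hb := sub_const_cobounded (b i)
    have h2 : Tendsto (fun x : ℂ => (a i - b i) / (x - b i) ^ 2) (cobounded ℂ) (𝓝 0) := by
      have hinv : Tendsto (fun x : ℂ => ((x - b i)⁻¹) ^ 2) (cobounded ℂ) (𝓝 0) := by
        have := ((tendsto_inv₀_cobounded).comp hb).pow 2
        simpa using this
      have := (tendsto_const_nhds (x := (a i - b i : ℂ))).mul hinv
      simpa [div_eq_mul_inv, ← inv_pow] using this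
    simpa using (tendsto_prodFactor (s.erase i) a b).mul h2
  have := tendsto_finset_sum s key
  simpa using this
end H2

section H3

private lemma prod_finset_eq_fin {κ : Type*} (I : Finset κ) (f : κ → ℂ) :
    ∏ i ∈ I, f i = ∏ k : Fin I.card, f (I.equivFin.symm k) := by
  rw [← Finset.prod_coe_sort I f]
  exact (Equiv.prod_comp I.equivFin.symm fun x => f x).symm

private lemma quot_eq_prodFactor {κ ι : Type*} (ζ : κ → ℂ) (z : ι → ℂ) (I : Finset κ)
    (J : Finset ι) (h : I.card = J.card) :
    ∃ a b : Fin I.card → ℂ,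
      (fun w : ℂ => (∏ i ∈ I, (w - ζ i)) / ∏ j ∈ J, (w - z j))
        = fun w : ℂ => ∏ k, (w - a k) / (w - b k) := by
  refine ⟨fun k => ζ (I.equivFin.symm k), fun k => z (J.equivFin.symm (Fin.cast h k)), ?_⟩
  funext w
  rw [Finset.prod_div_distrib]
  congr 1
  · exact prod_finset_eq_fin I (fun i => w - ζ i)
  · rw [prod_finset_eq_fin J (fun j => w - z j)]
    exact ((finCongr h).prod_comp fun k => w - z (J.equivFin.symm k)).symm

private lemma tendsto_quot_one {κ ι : Type*} (ζ : κ → ℂ) (z : ι → ℂ) (I : Finset κ)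
    (J : Finset ι) (h : I.card = J.card) :
    Tendsto (fun w : ℂ => (∏ i ∈ I, (w - ζ i)) / ∏ j ∈ J, (w - z j))
      (cobounded ℂ) (𝓝 1) := by
  obtain ⟨a, b, he⟩ := quot_eq_prodFactor ζ z I J h
  rw [he]
  exact tendsto_prodFactor _ a b

private lemma tendsto_deriv_quot_zero {κ ι : Type*} (ζ : κ → ℂ) (z : ι → ℂ) (I : Finset κ)
    (J : Finset ι) (h : I.card = J.card) :
    Tendsto (fun x : ℂ => deriv (fun w : ℂ => (∏ i ∈ I, (w - ζ i)) / ∏ j ∈ J, (w - z j)) x)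
      (cobounded ℂ) (𝓝 0) := by
  obtain ⟨a, b, he⟩ := quot_eq_prodFactor ζ z I J h
  rw [he]
  have hev : ∀ᶠ x : ℂ in cobounded ℂ, ∀ k, x ≠ b k :=
    eventually_all.2 fun k => Bornology.eventually_ne_cobounded (b k)
  refine (tendsto_derivFormula_zero Finset.univ a b).congr' ?_
  filter_upwards [hev] with x hx
  exact ((hasDerivAt_prodFactor Finset.univ a b fun k _ => hx k).deriv).symm

private lemma differentiableAt_quot {κ ι : Type*} (ζ : κ → ℂ) (z : ι → ℂ) (I : Finset κ)
    (J : Finset ι) {x : ℂ} (hx : ∀ j ∈ J, x ≠ z j) :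
    DifferentiableAt ℂ (fun w : ℂ => (∏ i ∈ I, (w - ζ i)) / ∏ j ∈ J, (w - z j)) x := by
  classical
  apply DifferentiableAt.div
  · exact DifferentiableAt.fun_finsetProd fun i _ => differentiableAt_id.sub_const _
  · exact DifferentiableAt.fun_finsetProd fun j _ => differentiableAt_id.sub_const _
  · rw [Finset.prod_ne_zero_iff]
    exact fun j hj => sub_ne_zero.2 (hx j hj)

end H3

section H4
variable {ι κ : Type*} [Fintype ι] [Fintype κ]

private lemma tendsto_phiHalf_one (z : ι → ℂ) (ζ : κ → ℂ) (I : Finset κ)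
    (h : I.card = Fintype.card ι) :
    Tendsto (phiHalf z ζ I) (cobounded ℂ) (𝓝 1) := by
  have := tendsto_quot_one ζ z I Finset.univ (by simpa using h)
  exact this

private lemma tendsto_deriv_phiHalf_zero (z : ι → ℂ) (ζ : κ → ℂ) (I : Finset κ)
    (h : I.card = Fintype.card ι) :
    Tendsto (fun x : ℂ => deriv (phiHalf z ζ I) x) (cobounded ℂ) (𝓝 0) := by
  have := tendsto_deriv_quot_zero ζ z I Finset.univ (by simpa using h)
  exact this

private lemma differentiableAt_phiHalf (z : ι → ℂ) (ζ : κ → ℂ) (I : Finset κ) {x : ℂ}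
    (hx : ∀ r, x ≠ z r) : DifferentiableAt ℂ (phiHalf z ζ I) x :=
  differentiableAt_quot ζ z I Finset.univ fun r _ => hx r

private lemma differentiableAt_phiHalfR [DecidableEq ι] (z : ι → ℂ) (ζ : κ → ℂ)
    (I : Finset κ) (r : ι) {x : ℂ} (hx : ∀ s, s ≠ r → x ≠ z s) :
    DifferentiableAt ℂ (phiHalfR z ζ I r) x :=
  differentiableAt_quot ζ z I (Finset.univ.erase r)
    fun s hs => hx s (Finset.ne_of_mem_erase hs)

end H4

section H5
variable {ι₁ ι₂ κ₁ κ₂ : Type*} [Fintype ι₁] [Fintype ι₂] [Fintype κ₁] [Fintype κ₂]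
  [DecidableEq ι₁] [DecidableEq ι₂]

private lemma erase_inl (r : ι₁) :
    ((Finset.univ : Finset (ι₁ ⊕ ι₂)).erase (Sum.inl r))
      = (Finset.univ.erase r).disjSum Finset.univ := by
  ext x; cases x <;> simp

private lemma erase_inr (r : ι₂) :
    ((Finset.univ : Finset (ι₁ ⊕ ι₂)).erase (Sum.inr r))
      = Finset.univ.disjSum (Finset.univ.erase r) := by
  ext x; cases x <;> simp

private lemma phiHalf_factor (z1 : ι₁ → ℂ) (ζ1 : κ₁ → ℂ) (z2 : ι₂ → ℂ) (ζ2 : κ₂ → ℂ)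
    (u : ℂ) (Ia : Finset κ₁) (Ib : Finset κ₂) (w : ℂ) :
    phiHalf (Sum.elim z1 fun r => z2 r + u) (Sum.elim ζ1 fun i => ζ2 i + u) (Ia.disjSum Ib) w
      = phiHalf z1 ζ1 Ia w * phiHalf z2 ζ2 Ib (w - u) := by
  unfold phiHalf
  rw [Finset.prod_disjSum, Fintype.prod_sum_type, div_mul_div_comm]
  simp only [Sum.elim_inl, Sum.elim_inr]
  have e1 : ∀ c : ℂ, w - (c + u) = w - u - c := fun c => by ring
  simp only [e1]

private lemma phiHalfR_factor_inl (z1 : ι₁ → ℂ) (ζ1 : κ₁ → ℂ) (z2 : ι₂ → ℂ) (ζ2 : κ₂ → ℂ)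
    (u : ℂ) (Ia : Finset κ₁) (Ib : Finset κ₂) (r : ι₁) (w : ℂ) :
    phiHalfR (Sum.elim z1 fun r => z2 r + u) (Sum.elim ζ1 fun i => ζ2 i + u)
        (Ia.disjSum Ib) (Sum.inl r) w
      = phiHalfR z1 ζ1 Ia r w * phiHalf z2 ζ2 Ib (w - u) := by
  unfold phiHalfR phiHalf
  rw [erase_inl, Finset.prod_disjSum, Finset.prod_disjSum, div_mul_div_comm]
  simp only [Sum.elim_inl, Sum.elim_inr]
  have e1 : ∀ c : ℂ, w - (c + u) = w - u - c := fun c => by ring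
  simp only [e1]

private lemma phiHalfR_factor_inr (z1 : ι₁ → ℂ) (ζ1 : κ₁ → ℂ) (z2 : ι₂ → ℂ) (ζ2 : κ₂ → ℂ)
    (u : ℂ) (Ia : Finset κ₁) (Ib : Finset κ₂) (r : ι₂) (w : ℂ) :
    phiHalfR (Sum.elim z1 fun r => z2 r + u) (Sum.elim ζ1 fun i => ζ2 i + u)
        (Ia.disjSum Ib) (Sum.inr r) w
      = phiHalf z1 ζ1 Ia w * phiHalfR z2 ζ2 Ib r (w - u) := by
  unfold phiHalfR phiHalf
  rw [erase_inr, Finset.prod_disjSum, Finset.prod_disjSum, div_mul_div_comm]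
  simp only [Sum.elim_inl, Sum.elim_inr]
  have e1 : ∀ c : ℂ, w - (c + u) = w - u - c := fun c => by ring
  simp only [e1]

end H5

private lemma tendsto_u_cobounded :
    Tendsto (fun γ : ℝ => ((γ : ℂ))⁻¹) (𝓝[≠] (0 : ℝ)) (cobounded ℂ) := by
  rw [← tendsto_norm_atTop_iff_cobounded]
  have hcoe : Tendsto (fun γ : ℝ => (γ : ℂ)) (𝓝[≠] (0 : ℝ)) (𝓝[≠] (0 : ℂ)) := by
    rw [tendsto_nhdsWithin_iff]
    constructor
    · exact (Complex.continuous_ofReal.tendsto' 0 0 (by simp)).mono_left nhdsWithin_le_nhds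
    · exact eventually_mem_nhdsWithin.mono fun γ hγ => by
        simp only [Set.mem_compl_iff, Set.mem_singleton_iff] at hγ ⊢
        exact_mod_cast hγ
  exact tendsto_norm_inv_nhdsNE_zero_atTop.comp hcoe

end Helpers

open Bornology in
/-- **Alternative decoupling limit of the coupled σ-model coefficients** (Section 3.3.3).
Combining the block data by shifting the positions and zeros of the second block by `γ⁻¹`, for
all sufficiently small `γ ≠ 0` the combined data satisfies the distinctness hypotheses and the
half twist functions factorise as `φ_±(z; γ) = φ^{(1)}_±(z) φ^{(2)}_±(z - γ⁻¹)`; moreover, as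
`γ → 0` the coefficients `ρ_{rs}(γ)` converge to the within-block coefficients (or to `0` for
mixed blocks) and the levels `k_r(γ)` converge to the within-block levels, so the coupled
action decouples into the sum of the two block actions. -/
theorem alternative_decoupling_of_action_coefficients
    {N₁ N₂ : ℕ} (hN₁ : 1 ≤ N₁) (hN₂ : 1 ≤ N₂)
    (z1 : Fin N₁ → ℂ) (ζ1 : Fin (2 * N₁) → ℂ)
    (z2 : Fin N₂ → ℂ) (ζ2 : Fin (2 * N₂) → ℂ)
    (hd1 : Function.Injective (Sum.elim z1 ζ1 : Fin N₁ ⊕ Fin (2 * N₁) → ℂ))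
    (hd2 : Function.Injective (Sum.elim z2 ζ2 : Fin N₂ ⊕ Fin (2 * N₂) → ℂ))
    (I1p I1m : Finset (Fin (2 * N₁))) (I2p I2m : Finset (Fin (2 * N₂)))
    (h1disj : Disjoint I1p I1m) (h1un : I1p ∪ I1m = Finset.univ)
    (h1p : I1p.card = N₁) (h1m : I1m.card = N₁)
    (h2disj : Disjoint I2p I2m) (h2un : I2p ∪ I2m = Finset.univ)
    (h2p : I2p.card = N₂) (h2m : I2m.card = N₂)
    (linf : ℂ) :
    -- for all sufficiently small `γ ≠ 0`, distinctness and factorisation hold …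
    (∃ ε > (0 : ℝ), ∀ γ : ℝ, 0 < |γ| → |γ| < ε →
      Function.Injective
        (Sum.elim (Sum.elim z1 fun r => z2 r + (γ : ℂ)⁻¹)
          (Sum.elim ζ1 fun i => ζ2 i + (γ : ℂ)⁻¹) :
          (Fin N₁ ⊕ Fin N₂) ⊕ (Fin (2 * N₁) ⊕ Fin (2 * N₂)) → ℂ) ∧
      (∀ w : ℂ,
        phiHalf (Sum.elim z1 fun r => z2 r + (γ : ℂ)⁻¹)
            (Sum.elim ζ1 fun i => ζ2 i + (γ : ℂ)⁻¹) (I1p.disjSum I2p) w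
          = phiHalf z1 ζ1 I1p w * phiHalf z2 ζ2 I2p (w - (γ : ℂ)⁻¹) ∧
        phiHalf (Sum.elim z1 fun r => z2 r + (γ : ℂ)⁻¹)
            (Sum.elim ζ1 fun i => ζ2 i + (γ : ℂ)⁻¹) (I1m.disjSum I2m) w
          = phiHalf z1 ζ1 I1m w * phiHalf z2 ζ2 I2m (w - (γ : ℂ)⁻¹))) ∧
    -- … the coefficients `ρ_{rs}(γ)` converge to the block coefficients, or to 0 across blocks
    (∀ r s : Fin N₁ ⊕ Fin N₂,
      Tendsto
        (fun γ : ℝ =>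
          rhoCoef linf (Sum.elim z1 fun r' => z2 r' + (γ : ℂ)⁻¹)
            (Sum.elim ζ1 fun i => ζ2 i + (γ : ℂ)⁻¹)
            (I1p.disjSum I2p) (I1m.disjSum I2m) r s)
        (𝓝[≠] (0 : ℝ))
        (𝓝 (match r, s with
          | Sum.inl r', Sum.inl s' => rhoCoef linf z1 ζ1 I1p I1m r' s'
          | Sum.inr r', Sum.inr s' => rhoCoef linf z2 ζ2 I2p I2m r' s'
          | _, _ => 0))) ∧
    -- … and the levels `k_r(γ)` converge to the block levels
    (∀ r : Fin N₁ ⊕ Fin N₂,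
      Tendsto
        (fun γ : ℝ =>
          kCoef linf (Sum.elim z1 fun r' => z2 r' + (γ : ℂ)⁻¹)
            (Sum.elim ζ1 fun i => ζ2 i + (γ : ℂ)⁻¹)
            (I1p.disjSum I2p) (I1m.disjSum I2m) r)
        (𝓝[≠] (0 : ℝ))
        (𝓝 (Sum.elim (fun r' => kCoef linf z1 ζ1 I1p I1m r')
          (fun r' => kCoef linf z2 ζ2 I2p I2m r') r))) := by

  classical
  have hz1 : Function.Injective z1 := fun a b h =>
    Sum.inl_injective (hd1 (show (Sum.elim z1 ζ1) (Sum.inl a) = (Sum.elim z1 ζ1) (Sum.inl b)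
      from h))
  have hz2 : Function.Injective z2 := fun a b h =>
    Sum.inl_injective (hd2 (show (Sum.elim z2 ζ2) (Sum.inl a) = (Sum.elim z2 ζ2) (Sum.inl b)
      from h))
  have hu := tendsto_u_cobounded
  have hsub : ∀ c : ℂ, Tendsto (fun γ : ℝ => c - ((γ : ℂ))⁻¹) (𝓝[≠] (0:ℝ)) (cobounded ℂ) :=
    fun c => (aff_cobounded hu c (-1) (by norm_num)).congr fun γ => by ring
  have hadd : ∀ c : ℂ, Tendsto (fun γ : ℝ => c + ((γ : ℂ))⁻¹) (𝓝[≠] (0:ℝ)) (cobounded ℂ) :=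
    fun c => (aff_cobounded hu c 1 one_ne_zero).congr fun γ => by ring
  have hev1 : ∀ c : ℂ, ∀ᶠ γ : ℝ in 𝓝[≠] (0:ℝ), ∀ s : Fin N₂, c - ((γ:ℂ))⁻¹ ≠ z2 s := fun c =>
    (hsub c).eventually (eventually_all.2 fun s => Bornology.eventually_ne_cobounded (z2 s))
  have hev2 : ∀ c : ℂ, ∀ᶠ γ : ℝ in 𝓝[≠] (0:ℝ), ∀ s : Fin N₁, c + ((γ:ℂ))⁻¹ ≠ z1 s := fun c =>
    (hadd c).eventually (eventually_all.2 fun s => Bornology.eventually_ne_cobounded (z1 s))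
  -- block-1 value and derivative limits
  have key1 : ∀ (J1 : Finset (Fin (2*N₁))) (J2 : Finset (Fin (2*N₂))), J2.card = N₂ →
      ∀ r' : Fin N₁,
      Tendsto (fun γ : ℝ => phiHalfR (Sum.elim z1 fun r => z2 r + ((γ:ℂ))⁻¹)
          (Sum.elim ζ1 fun i => ζ2 i + ((γ:ℂ))⁻¹) (J1.disjSum J2) (Sum.inl r') (z1 r'))
        (𝓝[≠] (0:ℝ)) (𝓝 (phiHalfR z1 ζ1 J1 r' (z1 r')))
      ∧ Tendsto (fun γ : ℝ => deriv (phiHalfR (Sum.elim z1 fun r => z2 r + ((γ:ℂ))⁻¹)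
          (Sum.elim ζ1 fun i => ζ2 i + ((γ:ℂ))⁻¹) (J1.disjSum J2) (Sum.inl r')) (z1 r'))
        (𝓝[≠] (0:ℝ)) (𝓝 (deriv (phiHalfR z1 ζ1 J1 r') (z1 r'))) := by
    intro J1 J2 hJ2 r'
    have hfac : ∀ γ : ℝ, phiHalfR (Sum.elim z1 fun r => z2 r + ((γ:ℂ))⁻¹)
        (Sum.elim ζ1 fun i => ζ2 i + ((γ:ℂ))⁻¹) (J1.disjSum J2) (Sum.inl r')
        = fun w => phiHalfR z1 ζ1 J1 r' w * phiHalf z2 ζ2 J2 (w - ((γ:ℂ))⁻¹) := fun γ =>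
      funext fun w => phiHalfR_factor_inl z1 ζ1 z2 ζ2 ((γ:ℂ))⁻¹ J1 J2 r' w
    have hcard2 : J2.card = Fintype.card (Fin N₂) := by simpa using hJ2
    have hg1 : Tendsto (fun γ : ℝ => phiHalf z2 ζ2 J2 (z1 r' - ((γ:ℂ))⁻¹))
        (𝓝[≠] (0:ℝ)) (𝓝 1) :=
      (tendsto_phiHalf_one z2 ζ2 J2 hcard2).comp (hsub (z1 r'))
    have hg0 : Tendsto (fun γ : ℝ => deriv (phiHalf z2 ζ2 J2) (z1 r' - ((γ:ℂ))⁻¹))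
        (𝓝[≠] (0:ℝ)) (𝓝 0) :=
      (tendsto_deriv_phiHalf_zero z2 ζ2 J2 hcard2).comp (hsub (z1 r'))
    have hdf : DifferentiableAt ℂ (phiHalfR z1 ζ1 J1 r') (z1 r') :=
      differentiableAt_phiHalfR z1 ζ1 J1 r' fun s hs h => hs (hz1 h.symm)
    constructor
    · have hlim := (tendsto_const_nhds
        (x := phiHalfR z1 ζ1 J1 r' (z1 r')) (f := 𝓝[≠] (0:ℝ))).mul hg1
      rw [mul_one] at hlim
      exact hlim.congr fun γ => (congrFun (hfac γ) (z1 r')).symm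
    · have hder : ∀ᶠ γ : ℝ in 𝓝[≠] (0:ℝ),
          deriv (phiHalfR z1 ζ1 J1 r') (z1 r') * phiHalf z2 ζ2 J2 (z1 r' - ((γ:ℂ))⁻¹)
            + phiHalfR z1 ζ1 J1 r' (z1 r') * deriv (phiHalf z2 ζ2 J2) (z1 r' - ((γ:ℂ))⁻¹)
          = deriv (phiHalfR (Sum.elim z1 fun r => z2 r + ((γ:ℂ))⁻¹)
              (Sum.elim ζ1 fun i => ζ2 i + ((γ:ℂ))⁻¹) (J1.disjSum J2) (Sum.inl r')) (z1 r') := by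
        filter_upwards [hev1 (z1 r')] with γ hγ
        rw [hfac γ]
        have hdg : DifferentiableAt ℂ (phiHalf z2 ζ2 J2) (z1 r' - ((γ:ℂ))⁻¹) :=
          differentiableAt_phiHalf z2 ζ2 J2 fun s => hγ s
        have hsubdiff : DifferentiableAt ℂ (fun w : ℂ => w - ((γ:ℂ))⁻¹) (z1 r') :=
          differentiableAt_id.sub_const _
        have hdgc : DifferentiableAt ℂ (fun w => phiHalf z2 ζ2 J2 (w - ((γ:ℂ))⁻¹)) (z1 r') :=
          DifferentiableAt.comp (g := phiHalf z2 ζ2 J2) (z1 r') hdg hsubdiff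
        rw [deriv_fun_mul hdf hdgc]
        simp only [deriv_comp_sub_const]
      have hlim := ((tendsto_const_nhds
          (x := deriv (phiHalfR z1 ζ1 J1 r') (z1 r')) (f := 𝓝[≠] (0:ℝ))).mul hg1).add
        ((tendsto_const_nhds (x := phiHalfR z1 ζ1 J1 r' (z1 r'))
          (f := 𝓝[≠] (0:ℝ))).mul hg0)
      rw [mul_one, mul_zero, add_zero] at hlim
      exact hlim.congr' hder
  -- block-2 value and derivative limits
  have key2 : ∀ (J1 : Finset (Fin (2*N₁))) (J2 : Finset (Fin (2*N₂))), J1.card = N₁ →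
      ∀ r' : Fin N₂,
      Tendsto (fun γ : ℝ => phiHalfR (Sum.elim z1 fun r => z2 r + ((γ:ℂ))⁻¹)
          (Sum.elim ζ1 fun i => ζ2 i + ((γ:ℂ))⁻¹) (J1.disjSum J2) (Sum.inr r')
          (z2 r' + ((γ:ℂ))⁻¹))
        (𝓝[≠] (0:ℝ)) (𝓝 (phiHalfR z2 ζ2 J2 r' (z2 r')))
      ∧ Tendsto (fun γ : ℝ => deriv (phiHalfR (Sum.elim z1 fun r => z2 r + ((γ:ℂ))⁻¹)
          (Sum.elim ζ1 fun i => ζ2 i + ((γ:ℂ))⁻¹) (J1.disjSum J2) (Sum.inr r'))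
          (z2 r' + ((γ:ℂ))⁻¹))
        (𝓝[≠] (0:ℝ)) (𝓝 (deriv (phiHalfR z2 ζ2 J2 r') (z2 r'))) := by
    intro J1 J2 hJ1 r'
    have hfac : ∀ γ : ℝ, phiHalfR (Sum.elim z1 fun r => z2 r + ((γ:ℂ))⁻¹)
        (Sum.elim ζ1 fun i => ζ2 i + ((γ:ℂ))⁻¹) (J1.disjSum J2) (Sum.inr r')
        = fun w => phiHalf z1 ζ1 J1 w * phiHalfR z2 ζ2 J2 r' (w - ((γ:ℂ))⁻¹) := fun γ =>
      funext fun w => phiHalfR_factor_inr z1 ζ1 z2 ζ2 ((γ:ℂ))⁻¹ J1 J2 r' w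
    have hcard1 : J1.card = Fintype.card (Fin N₁) := by simpa using hJ1
    have hg1 : Tendsto (fun γ : ℝ => phiHalf z1 ζ1 J1 (z2 r' + ((γ:ℂ))⁻¹))
        (𝓝[≠] (0:ℝ)) (𝓝 1) :=
      (tendsto_phiHalf_one z1 ζ1 J1 hcard1).comp (hadd (z2 r'))
    have hg0 : Tendsto (fun γ : ℝ => deriv (phiHalf z1 ζ1 J1) (z2 r' + ((γ:ℂ))⁻¹))
        (𝓝[≠] (0:ℝ)) (𝓝 0) :=
      (tendsto_deriv_phiHalf_zero z1 ζ1 J1 hcard1).comp (hadd (z2 r'))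
    have hdf : DifferentiableAt ℂ (phiHalfR z2 ζ2 J2 r') (z2 r') :=
      differentiableAt_phiHalfR z2 ζ2 J2 r' fun s hs h => hs (hz2 h.symm)
    constructor
    · have hlim := hg1.mul (tendsto_const_nhds
        (x := phiHalfR z2 ζ2 J2 r' (z2 r')) (f := 𝓝[≠] (0:ℝ)))
      rw [one_mul] at hlim
      refine hlim.congr fun γ => ?_
      rw [hfac γ]
      simp only [add_sub_cancel_right]
    · have hder : ∀ᶠ γ : ℝ in 𝓝[≠] (0:ℝ),
          deriv (phiHalf z1 ζ1 J1) (z2 r' + ((γ:ℂ))⁻¹) * phiHalfR z2 ζ2 J2 r' (z2 r')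
            + phiHalf z1 ζ1 J1 (z2 r' + ((γ:ℂ))⁻¹) * deriv (phiHalfR z2 ζ2 J2 r') (z2 r')
          = deriv (phiHalfR (Sum.elim z1 fun r => z2 r + ((γ:ℂ))⁻¹)
              (Sum.elim ζ1 fun i => ζ2 i + ((γ:ℂ))⁻¹) (J1.disjSum J2) (Sum.inr r'))
              (z2 r' + ((γ:ℂ))⁻¹) := by
        filter_upwards [hev2 (z2 r')] with γ hγ
        rw [hfac γ]
        have hdF : DifferentiableAt ℂ (phiHalf z1 ζ1 J1) (z2 r' + ((γ:ℂ))⁻¹) :=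
          differentiableAt_phiHalf z1 ζ1 J1 fun s => hγ s
        have hdg : DifferentiableAt ℂ (phiHalfR z2 ζ2 J2 r') (z2 r' + ((γ:ℂ))⁻¹ - ((γ:ℂ))⁻¹) := by
          rw [add_sub_cancel_right]; exact hdf
        have hdgc : DifferentiableAt ℂ (fun w => phiHalfR z2 ζ2 J2 r' (w - ((γ:ℂ))⁻¹))
            (z2 r' + ((γ:ℂ))⁻¹) := by
          have hsubdiff : DifferentiableAt ℂ (fun w : ℂ => w - ((γ:ℂ))⁻¹) (z2 r' + ((γ:ℂ))⁻¹) :=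
            differentiableAt_id.sub_const _
          exact DifferentiableAt.comp (g := phiHalfR z2 ζ2 J2 r') (z2 r' + ((γ:ℂ))⁻¹) hdg hsubdiff
        rw [deriv_fun_mul hdF hdgc]
        simp only [deriv_comp_sub_const, add_sub_cancel_right]
      have hlim := (hg0.mul (tendsto_const_nhds
          (x := phiHalfR z2 ζ2 J2 r' (z2 r')) (f := 𝓝[≠] (0:ℝ)))).add
        (hg1.mul (tendsto_const_nhds
          (x := deriv (phiHalfR z2 ζ2 J2 r') (z2 r')) (f := 𝓝[≠] (0:ℝ))))
      rw [zero_mul, one_mul, zero_add] at hlim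
      exact hlim.congr' hder
  refine ⟨?_, ?_, ?_⟩
  · -- part 1
    haveI : Nonempty (Fin N₁) := ⟨⟨0, hN₁⟩⟩
    haveI : Nonempty (Fin N₂) := ⟨⟨0, hN₂⟩⟩
    set T : Finset ℝ := Finset.image
      (fun p : (Fin N₁ ⊕ Fin (2*N₁)) × (Fin N₂ ⊕ Fin (2*N₂)) =>
        ‖Sum.elim z1 ζ1 p.1 - Sum.elim z2 ζ2 p.2‖) Finset.univ with hT
    have hTne : T.Nonempty := by
      refine ⟨‖Sum.elim z1 ζ1 (Sum.inl ⟨0, hN₁⟩) - Sum.elim z2 ζ2 (Sum.inl ⟨0, hN₂⟩)‖, ?_⟩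
      rw [hT]
      exact Finset.mem_image.2 ⟨(Sum.inl ⟨0, hN₁⟩, Sum.inl ⟨0, hN₂⟩), Finset.mem_univ _, rfl⟩
    set M : ℝ := T.max' hTne with hM
    have hMle : ∀ (p : Fin N₁ ⊕ Fin (2*N₁)) (q : Fin N₂ ⊕ Fin (2*N₂)),
        ‖Sum.elim z1 ζ1 p - Sum.elim z2 ζ2 q‖ ≤ M := fun p q =>
      Finset.le_max' T _ (Finset.mem_image.2 ⟨(p, q), Finset.mem_univ _, rfl⟩)
    have hM0 : 0 ≤ M :=
      le_trans (norm_nonneg _) (hMle (Sum.inl ⟨0, hN₁⟩) (Sum.inl ⟨0, hN₂⟩))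
    refine ⟨(M + 1)⁻¹, by positivity, ?_⟩
    intro γ hγ0 hγε
    have hbig : M < ‖((γ:ℂ))⁻¹‖ := by
      have h1 : ‖((γ:ℂ))⁻¹‖ = |γ|⁻¹ := by
        rw [norm_inv, Complex.norm_real, Real.norm_eq_abs]
      rw [h1]
      have hpos : (0:ℝ) < M + 1 := by linarith
      have h2 : M + 1 < |γ|⁻¹ := (lt_inv_comm₀ hγ0 hpos).1 hγε
      linarith
    have hcross : ∀ (p : Fin N₁ ⊕ Fin (2*N₁)) (q : Fin N₂ ⊕ Fin (2*N₂)),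
        Sum.elim z1 ζ1 p ≠ Sum.elim z2 ζ2 q + ((γ:ℂ))⁻¹ := by
      intro p q h
      have : ((γ:ℂ))⁻¹ = Sum.elim z1 ζ1 p - Sum.elim z2 ζ2 q := by
        rw [h]; ring
      rw [this] at hbig
      exact absurd (hMle p q) (not_le.2 hbig)
    constructor
    · intro x y hxy
      rcases x with a | a <;> rcases a with a | a <;> rcases y with b | b <;> rcases b with b | b <;>
        simp only [Sum.elim_inl, Sum.elim_inr] at hxy
      · obtain rfl : a = b := hz1 hxy; rfl
      · exact absurd hxy (hcross (Sum.inl a) (Sum.inl b))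
      · exact absurd (hd1 (show Sum.elim z1 ζ1 (Sum.inl a) = Sum.elim z1 ζ1 (Sum.inr b)
          from hxy)) (by simp)
      · exact absurd hxy (hcross (Sum.inl a) (Sum.inr b))
      · exact absurd hxy.symm (hcross (Sum.inl b) (Sum.inl a))
      · obtain rfl : a = b := hz2 (add_right_cancel hxy); rfl
      · exact absurd hxy.symm (hcross (Sum.inr b) (Sum.inl a))
      · exact absurd (hd2 (show Sum.elim z2 ζ2 (Sum.inl a) = Sum.elim z2 ζ2 (Sum.inr b)
          from add_right_cancel hxy)) (by simp)
      · exact absurd (hd1 (show Sum.elim z1 ζ1 (Sum.inr a) = Sum.elim z1 ζ1 (Sum.inl b)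
          from hxy)) (by simp)
      · exact absurd hxy (hcross (Sum.inr a) (Sum.inl b))
      · obtain rfl : a = b := Sum.inr_injective (hd1 (show Sum.elim z1 ζ1 (Sum.inr a)
          = Sum.elim z1 ζ1 (Sum.inr b) from hxy)); rfl
      · exact absurd hxy (hcross (Sum.inr a) (Sum.inr b))
      · exact absurd hxy.symm (hcross (Sum.inl b) (Sum.inr a))
      · exact absurd (hd2 (show Sum.elim z2 ζ2 (Sum.inr a) = Sum.elim z2 ζ2 (Sum.inl b)
          from add_right_cancel hxy)) (by simp)
      · exact absurd hxy.symm (hcross (Sum.inr b) (Sum.inr a))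
      · obtain rfl : a = b := Sum.inr_injective (hd2 (show Sum.elim z2 ζ2 (Sum.inr a)
          = Sum.elim z2 ζ2 (Sum.inr b) from add_right_cancel hxy)); rfl
    · intro w
      exact ⟨phiHalf_factor z1 ζ1 z2 ζ2 _ I1p I2p w, phiHalf_factor z1 ζ1 z2 ζ2 _ I1m I2m w⟩
  · -- part 2 : rho coefficients
    intro r s
    rcases r with r' | r' <;> rcases s with s' | s'
    · by_cases h : r' = s'
      · subst h
        have main := (( (key1 I1p I2p h2p r').2.mul (key1 I1m I2m h2m r').1 ).sub
          ( (key1 I1p I2p h2p r').1.mul (key1 I1m I2m h2m r').2 )).const_mul (linf / 4)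
        show Tendsto _ _ (𝓝 (rhoCoef linf z1 ζ1 I1p I1m r' r'))
        simp only [rhoCoef, if_pos rfl, Sum.elim_inl]
        exact main
      · have main := ((tendsto_const_nhds (x := linf / 2) (f := 𝓝[≠] (0:ℝ))).mul
            ((key1 I1p I2p h2p r').1)).mul (((key1 I1m I2m h2m s').1)) |>.div_const
            (z1 r' - z1 s')
        have hne : (Sum.inl r' : Fin N₁ ⊕ Fin N₂) ≠ Sum.inl s' := by simp [h]
        show Tendsto _ _ (𝓝 (rhoCoef linf z1 ζ1 I1p I1m r' s'))
        simp only [rhoCoef, if_neg hne, if_neg h, Sum.elim_inl]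
        exact main
    · -- r in block 1, s in block 2 : limit 0
      have hinv : Tendsto (fun γ : ℝ => (z1 r' - (z2 s' + ((γ:ℂ))⁻¹))⁻¹)
          (𝓝[≠] (0:ℝ)) (𝓝 0) := by
        have hcb : Tendsto (fun γ : ℝ => z1 r' - (z2 s' + ((γ:ℂ))⁻¹))
            (𝓝[≠] (0:ℝ)) (cobounded ℂ) :=
          (aff_cobounded hu (z1 r' - z2 s') (-1) (by norm_num)).congr fun γ => by ring
        exact tendsto_inv₀_cobounded.comp hcb
      have main := (((tendsto_const_nhds (x := linf / 2) (f := 𝓝[≠] (0:ℝ))).mul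
          ((key1 I1p I2p h2p r').1)).mul ((key2 I1m I2m h1m s').1)).mul hinv
      rw [mul_zero] at main
      have hne : (Sum.inl r' : Fin N₁ ⊕ Fin N₂) ≠ Sum.inr s' := by simp
      show Tendsto _ _ (𝓝 0)
      simp only [rhoCoef, if_neg hne, Sum.elim_inl, Sum.elim_inr]
      refine main.congr fun γ => ?_
      exact (div_eq_mul_inv _ _).symm
    · -- r in block 2, s in block 1 : limit 0
      have hinv : Tendsto (fun γ : ℝ => ((z2 r' + ((γ:ℂ))⁻¹) - z1 s')⁻¹)
          (𝓝[≠] (0:ℝ)) (𝓝 0) := by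
        have hcb : Tendsto (fun γ : ℝ => (z2 r' + ((γ:ℂ))⁻¹) - z1 s')
            (𝓝[≠] (0:ℝ)) (cobounded ℂ) :=
          (aff_cobounded hu (z2 r' - z1 s') 1 one_ne_zero).congr fun γ => by ring
        exact tendsto_inv₀_cobounded.comp hcb
      have main := (((tendsto_const_nhds (x := linf / 2) (f := 𝓝[≠] (0:ℝ))).mul
          ((key2 I1p I2p h1p r').1)).mul ((key1 I1m I2m h2m s').1)).mul hinv
      rw [mul_zero] at main
      have hne : (Sum.inr r' : Fin N₁ ⊕ Fin N₂) ≠ Sum.inl s' := by simp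
      show Tendsto _ _ (𝓝 0)
      simp only [rhoCoef, if_neg hne, Sum.elim_inl, Sum.elim_inr]
      refine main.congr fun γ => ?_
      exact (div_eq_mul_inv _ _).symm
    · by_cases h : r' = s'
      · subst h
        have main := (( (key2 I1p I2p h1p r').2.mul (key2 I1m I2m h1m r').1 ).sub
          ( (key2 I1p I2p h1p r').1.mul (key2 I1m I2m h1m r').2 )).const_mul (linf / 4)
        show Tendsto _ _ (𝓝 (rhoCoef linf z2 ζ2 I2p I2m r' r'))
        simp only [rhoCoef, if_pos rfl, Sum.elim_inr]
        exact main
      · have hc : ∀ γ : ℝ, (z2 r' + ((γ:ℂ))⁻¹) - (z2 s' + ((γ:ℂ))⁻¹) = z2 r' - z2 s' :=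
          fun γ => by ring
        have main := ((tendsto_const_nhds (x := linf / 2) (f := 𝓝[≠] (0:ℝ))).mul
            ((key2 I1p I2p h1p r').1)).mul (((key2 I1m I2m h1m s').1)) |>.div_const
            (z2 r' - z2 s')
        have hne : (Sum.inr r' : Fin N₁ ⊕ Fin N₂) ≠ Sum.inr s' := by simp [h]
        show Tendsto _ _ (𝓝 (rhoCoef linf z2 ζ2 I2p I2m r' s'))
        simp only [rhoCoef, if_neg hne, if_neg h, Sum.elim_inr]
        refine main.congr fun γ => ?_
        rw [hc γ]
  · -- part 3 : levels
    intro r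
    rcases r with r' | r'
    · have main := (( (key1 I1p I2p h2p r').1.mul (key1 I1m I2m h2m r').2 ).add
        ( (key1 I1p I2p h2p r').2.mul (key1 I1m I2m h2m r').1 )).const_mul (linf / 2)
      show Tendsto _ _ (𝓝 (kCoef linf z1 ζ1 I1p I1m r'))
      simp only [kCoef, Sum.elim_inl]
      exact main
    · have main := (( (key2 I1p I2p h1p r').1.mul (key2 I1m I2m h1m r').2 ).add
        ( (key2 I1p I2p h1p r').2.mul (key2 I1m I2m h1m r').1 )).const_mul (linf / 2)
      show Tendsto _ _ (𝓝 (kCoef linf z2 ζ2 I2p I2m r'))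
      simp only [kCoef, Sum.elim_inr]
      exact main
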